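/- Let f∈C([0,1]), h:ℝ→ℝ continuous and bounded with primitive H, and g_0:ℝ→ℝ continuous with finite limit g_0(+∞):=lim_{u→+∞}g_0(u); set g(u)=(1+|u|)g_0(u). For the sequence u_k(t)=k on [1/2,1/2+1/k], 0 elsewhere, and y_k its primitive with y_k(0)=0, one has lim_{k→∞} ∫_0^1 f(t) g(u_k(t)) h(y_k(t)) dt = ∫_0^{1/2} f(t) g(0) h(0) dt + ∫_{1/2}^1 f(t) g(0) h(1) dt + f(1/2) g_0(+∞) (H(1)−H(0)). -/

import Mathlib

open MeasureTheory Filter Set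

/-- Control spike of height `k` on `[1/2, 1/2 + 1/k]`. -/
noncomputable def uSpike (k : ℕ) (t : ℝ) : ℝ :=
  if t ∈ Set.Icc (1 / 2 : ℝ) (1 / 2 + 1 / k) then (k : ℝ) else 0

noncomputable def ySpike (k : ℕ) (t : ℝ) : ℝ := ∫ s in (0:ℝ)..t, uSpike k s

lemma uSpike_eq_indicator (k : ℕ) :
    uSpike k = (Set.Icc (1/2 : ℝ) (1/2 + 1/k)).indicator (fun _ => (k:ℝ)) := by
  funext s; simp [uSpike, Set.indicator_apply]

lemma ySpike_formula (k : ℕ) {t : ℝ} (ht : 0 ≤ t) :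
    ySpike k t = k * max (min t (1/2 + 1/k) - 1/2) 0 := by
  have hset : Ioc (0:ℝ) t ∩ Icc (1/2 : ℝ) (1/2 + 1/k) = Icc (1/2 : ℝ) (min t (1/2 + 1/k)) := by
    ext x
    simp only [mem_inter_iff, mem_Ioc, mem_Icc, le_min_iff]
    constructor
    · rintro ⟨⟨_, h2⟩, h3, h4⟩; exact ⟨h3, h2, h4⟩
    · rintro ⟨h1, h2, h3⟩; exact ⟨⟨by linarith, h2⟩, h1, h3⟩
  rw [ySpike, intervalIntegral.integral_of_le ht, uSpike_eq_indicator,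
    MeasureTheory.setIntegral_indicator measurableSet_Icc, hset,
    MeasureTheory.setIntegral_const, measureReal_def, Real.volume_Icc, smul_eq_mul]
  rcases le_total (min t (1/2 + 1/k)) (1/2 : ℝ) with hc | hc
  · rw [ENNReal.ofReal_eq_zero.mpr (by linarith), max_eq_right (by linarith)]
    simp
  · rw [ENNReal.toReal_ofReal (by linarith), max_eq_left (by linarith)]; ring

lemma ySpike_left (k : ℕ) {t : ℝ} (ht0 : 0 ≤ t) (ht : t ≤ 1/2) : ySpike k t = 0 := by
  rw [ySpike_formula k ht0, max_eq_right, mul_zero]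
  have : min t (1/2 + 1/k) ≤ t := min_le_left _ _
  linarith

lemma ySpike_mid (k : ℕ) {t : ℝ} (ht0 : 1/2 ≤ t) (ht : t ≤ 1/2 + 1/k) :
    ySpike k t = k * (t - 1/2) := by
  rw [ySpike_formula k (by linarith), min_eq_left ht, max_eq_left (by linarith)]

lemma ySpike_right (k : ℕ) (hk : 1 ≤ k) {t : ℝ} (ht : 1/2 + 1/k ≤ t) : ySpike k t = 1 := by
  have hk0 : (k:ℝ) ≠ 0 := by positivity
  have h2 : (0:ℝ) < 1/k := by positivity
  rw [ySpike_formula k (by linarith), min_eq_right ht, max_eq_left (by linarith)]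
  field_simp; ring

lemma uSpike_of_lt (k : ℕ) {t : ℝ} (ht : t < 1/2) : uSpike k t = 0 := by
  rw [uSpike, if_neg]; rintro ⟨h1, _⟩; linarith

lemma uSpike_of_gt (k : ℕ) {t : ℝ} (ht : 1/2 + 1/k < t) : uSpike k t = 0 := by
  rw [uSpike, if_neg]; rintro ⟨_, h2⟩; linarith

lemma uSpike_of_mem (k : ℕ) {t : ℝ} (h1 : 1/2 ≤ t) (h2 : t ≤ 1/2 + 1/k) : uSpike k t = k := by
  rw [uSpike, if_pos (Set.mem_Icc.mpr ⟨h1, h2⟩)]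

lemma ae_ne_real (c : ℝ) : ∀ᵐ t : ℝ, t ≠ c := by
  have : (volume : Measure ℝ) {c} = 0 := Real.volume_singleton
  filter_upwards [MeasureTheory.measure_eq_zero_iff_ae_notMem.mp this] with t ht
  simpa using ht

lemma split_eq (f h H g₀ : ℝ → ℝ)
    (hf : ContinuousOn f (Set.Icc 0 1))
    (hh : Continuous h)
    (hH : ∀ x, HasDerivAt H (h x) x)
    (hg₀ : Continuous g₀) (k : ℕ) (hk : 2 ≤ k) :
    ∫ t in (0:ℝ)..1, f t * ((1 + |uSpike k t|) * g₀ (uSpike k t)) * h (ySpike k t)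
    = (∫ t in (0:ℝ)..(1/2), f t * ((1 + |(0:ℝ)|) * g₀ 0) * h 0)
      + ((((1:ℝ)+(k:ℝ))/(k:ℝ)) * g₀ (k:ℝ) * (f (1/2) * (H 1 - H 0))
         + (((1:ℝ)+(k:ℝ)) * g₀ (k:ℝ))
            * ∫ t in (1/2:ℝ)..(1/2+1/(k:ℝ)), (f t - f (1/2)) * h ((k:ℝ)*(t-1/2)))
      + ∫ t in (1/2+1/(k:ℝ))..1, f t * ((1 + |(0:ℝ)|) * g₀ 0) * h 1 := by
  have hκ2 : (2:ℝ) ≤ (k:ℝ) := by exact_mod_cast hk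
  have hκ0 : (0:ℝ) < (k:ℝ) := by linarith
  have hκne : (k:ℝ) ≠ 0 := ne_of_gt hκ0
  set b : ℝ := 1/2 + 1/(k:ℝ) with hbdef
  have hbpos : (1/2:ℝ) ≤ b := by
    have : (0:ℝ) < 1/(k:ℝ) := by positivity
    simp only [hbdef]; linarith
  have hb1 : b ≤ 1 := by
    have : (1:ℝ)/(k:ℝ) ≤ 1/2 := by
      rw [div_le_div_iff₀ hκ0 (by norm_num)]; linarith
    simp only [hbdef]; linarith
  set F : ℝ → ℝ := fun t => f t * ((1 + |uSpike k t|) * g₀ (uSpike k t)) * h (ySpike k t)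
    with hFdef
  set G₁ : ℝ → ℝ := fun t => f t * ((1 + |(0:ℝ)|) * g₀ 0) * h 0 with hG1def
  set G₂ : ℝ → ℝ := fun t => f t * ((1 + (k:ℝ)) * g₀ (k:ℝ)) * h ((k:ℝ)*(t-1/2)) with hG2def
  set G₃ : ℝ → ℝ := fun t => f t * ((1 + |(0:ℝ)|) * g₀ 0) * h 1 with hG3def
  -- pointwise identifications
  have hFG1 : ∀ t ∈ Set.Ioc (0:ℝ) (1/2), t ≠ 1/2 → F t = G₁ t := by
    intro t ht hne
    have ht2 : t < 1/2 := lt_of_le_of_ne ht.2 hne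
    simp only [hFdef, hG1def]
    rw [uSpike_of_lt k ht2, ySpike_left k (le_of_lt ht.1) ht.2]
  have hFG2 : ∀ t ∈ Set.Icc (1/2:ℝ) b, F t = G₂ t := by
    intro t ht
    simp only [hFdef, hG2def]
    rw [uSpike_of_mem k ht.1 ht.2, ySpike_mid k ht.1 ht.2, abs_of_nonneg (le_of_lt hκ0)]
  have hFG3 : ∀ t ∈ Set.Ioc b (1:ℝ), t ≠ b → F t = G₃ t := by
    intro t ht hne
    have ht2 : b < t := ht.1
    simp only [hFdef, hG3def]
    rw [uSpike_of_gt k ht2, ySpike_right k (by omega) (le_of_lt ht2)]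
  -- fail / integrability of the model functions
  have hG1c : IntervalIntegrable G₁ volume 0 (1/2) := by
    apply ContinuousOn.intervalIntegrable
    rw [Set.uIcc_of_le (by norm_num)]
    exact ((hf.mono (Set.Icc_subset_Icc le_rfl (by norm_num))).mul continuousOn_const).mul
      continuousOn_const
  have hG2c : IntervalIntegrable G₂ volume (1/2) b := by
    apply ContinuousOn.intervalIntegrable
    rw [Set.uIcc_of_le hbpos]
    have h1 : ContinuousOn f (Set.Icc (1/2:ℝ) b) :=
      hf.mono (Set.Icc_subset_Icc (by norm_num) hb1)
    exact (h1.mul continuousOn_const).mul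
      ((hh.comp (continuous_const.mul (continuous_id.sub continuous_const))).continuousOn)
  have hG3c : IntervalIntegrable G₃ volume b 1 := by
    apply ContinuousOn.intervalIntegrable
    rw [Set.uIcc_of_le hb1]
    exact ((hf.mono (Set.Icc_subset_Icc (le_trans (by norm_num : (0:ℝ) ≤ 1/2) hbpos) le_rfl)).mul
      continuousOn_const).mul continuousOn_const
  -- interval integrability of F on the three pieces
  have hae1 : G₁ =ᵐ[volume.restrict (Set.uIoc (0:ℝ) (1/2))] F := by
    filter_upwards [MeasureTheory.ae_restrict_of_ae (ae_ne_real (1/2)),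
      MeasureTheory.ae_restrict_mem measurableSet_uIoc] with t ht hmem
    rw [Set.uIoc_of_le (by norm_num : (0:ℝ) ≤ 1/2)] at hmem
    exact (hFG1 t hmem ht).symm
  have hae3 : G₃ =ᵐ[volume.restrict (Set.uIoc b (1:ℝ))] F := by
    filter_upwards [MeasureTheory.ae_restrict_of_ae (ae_ne_real b),
      MeasureTheory.ae_restrict_mem measurableSet_uIoc] with t ht hmem
    rw [Set.uIoc_of_le hb1] at hmem
    exact (hFG3 t hmem ht).symm
  have hF1 : IntervalIntegrable F volume 0 (1/2) := hG1c.congr_ae hae1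
  have hF2 : IntervalIntegrable F volume (1/2) b := by
    apply hG2c.congr_ae
    filter_upwards [MeasureTheory.ae_restrict_mem measurableSet_uIoc] with t hmem
    rw [Set.uIoc_of_le hbpos] at hmem
    exact (hFG2 t ⟨le_of_lt hmem.1, hmem.2⟩).symm
  have hF3 : IntervalIntegrable F volume b 1 := hG3c.congr_ae hae3
  -- split
  have hsplit : ∫ t in (0:ℝ)..1, F t
      = (∫ t in (0:ℝ)..(1/2), F t) + (∫ t in (1/2:ℝ)..b, F t) + ∫ t in b..(1:ℝ), F t := by
    rw [intervalIntegral.integral_add_adjacent_intervals hF1 hF2,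
      intervalIntegral.integral_add_adjacent_intervals (hF1.trans hF2) hF3]
  -- identify first and third pieces
  have he1 : ∫ t in (0:ℝ)..(1/2), F t = ∫ t in (0:ℝ)..(1/2), G₁ t := by
    apply intervalIntegral.integral_congr_ae
    filter_upwards [ae_ne_real (1/2)] with t ht hmem
    rw [Set.uIoc_of_le (by norm_num : (0:ℝ) ≤ 1/2)] at hmem
    exact hFG1 t hmem ht
  have he3 : ∫ t in b..(1:ℝ), F t = ∫ t in b..(1:ℝ), G₃ t := by
    apply intervalIntegral.integral_congr_ae
    filter_upwards [ae_ne_real b] with t ht hmem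
    rw [Set.uIoc_of_le hb1] at hmem
    exact hFG3 t hmem ht
  have he2 : ∫ t in (1/2:ℝ)..b, F t = ∫ t in (1/2:ℝ)..b, G₂ t := by
    apply intervalIntegral.integral_congr
    intro t ht
    rw [Set.uIcc_of_le hbpos] at ht
    exact hFG2 t ht
  -- compute middle piece
  have key : ∫ t in (1/2:ℝ)..b, h ((k:ℝ)*(t-1/2)) = (H 1 - H 0)/(k:ℝ) := by
    have hderiv : ∀ t ∈ Set.uIcc (1/2:ℝ) b,
        HasDerivAt (fun s => H ((k:ℝ)*(s-1/2)) / (k:ℝ)) (h ((k:ℝ)*(t-1/2))) t := by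
      intro t _
      have hlin : HasDerivAt (fun s : ℝ => (k:ℝ)*(s-1/2)) (k:ℝ) t := by
        exact (((hasDerivAt_id' t).sub_const (1/2)).const_mul (k:ℝ)).congr_deriv (mul_one _)
      have := ((hH ((k:ℝ)*(t-1/2))).comp t hlin).div_const (k:ℝ)
      simpa [mul_div_assoc, mul_div_cancel_right₀ _ hκne] using this
    have hcont : IntervalIntegrable (fun t => h ((k:ℝ)*(t-1/2))) volume (1/2) b :=
      (hh.comp (continuous_const.mul (continuous_id.sub continuous_const))).intervalIntegrable _ _
    rw [intervalIntegral.integral_eq_sub_of_hasDerivAt hderiv hcont]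
    have : (k:ℝ) * (b - 1/2) = 1 := by
      simp only [hbdef]; field_simp; ring
    rw [show (k:ℝ)*(b-1/2) = 1 from this]
    simp [sub_div]
  have hfc : ContinuousOn f (Set.Icc (1/2:ℝ) b) :=
    hf.mono (Set.Icc_subset_Icc (by norm_num) hb1)
  have hint1 : IntervalIntegrable (fun t => f (1/2) * h ((k:ℝ)*(t-1/2))) volume (1/2) b :=
    ((continuous_const.mul (hh.comp (continuous_const.mul (continuous_id.sub continuous_const)))).intervalIntegrable _ _)
  have hint2 : IntervalIntegrable (fun t => (f t - f (1/2)) * h ((k:ℝ)*(t-1/2))) volume (1/2) b := by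
    apply ContinuousOn.intervalIntegrable
    rw [Set.uIcc_of_le hbpos]
    exact (hfc.sub continuousOn_const).mul (hh.comp (continuous_const.mul (continuous_id.sub continuous_const))).continuousOn
  have he2' : ∫ t in (1/2:ℝ)..b, G₂ t
      = (((1:ℝ)+(k:ℝ))/(k:ℝ)) * g₀ (k:ℝ) * (f (1/2) * (H 1 - H 0))
        + (((1:ℝ)+(k:ℝ)) * g₀ (k:ℝ))
           * ∫ t in (1/2:ℝ)..b, (f t - f (1/2)) * h ((k:ℝ)*(t-1/2)) := by
    have step1 : ∫ t in (1/2:ℝ)..b, G₂ t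
        = ((1 + (k:ℝ)) * g₀ (k:ℝ)) * ∫ t in (1/2:ℝ)..b, f t * h ((k:ℝ)*(t-1/2)) := by
      rw [← intervalIntegral.integral_const_mul]
      apply intervalIntegral.integral_congr
      intro t _
      simp only [hG2def]; ring
    have step2 : ∫ t in (1/2:ℝ)..b, f t * h ((k:ℝ)*(t-1/2))
        = f (1/2) * ((H 1 - H 0)/(k:ℝ))
          + ∫ t in (1/2:ℝ)..b, (f t - f (1/2)) * h ((k:ℝ)*(t-1/2)) := by
      have : ∫ t in (1/2:ℝ)..b, f t * h ((k:ℝ)*(t-1/2))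
          = ∫ t in (1/2:ℝ)..b,
              (f (1/2) * h ((k:ℝ)*(t-1/2)) + (f t - f (1/2)) * h ((k:ℝ)*(t-1/2))) := by
        apply intervalIntegral.integral_congr; intro t _; ring
      rw [this, intervalIntegral.integral_add hint1 hint2,
        intervalIntegral.integral_const_mul, key]
    rw [step1, step2]
    field_simp
  rw [hsplit, he1, he2, he3, he2']


theorem anisotropic_limit_single_spike
    (f h H g₀ : ℝ → ℝ) (g₀inf : ℝ) (M : ℝ)
    (hf : ContinuousOn f (Set.Icc 0 1))
    (hh : Continuous h) (hhbd : ∀ y, |h y| ≤ M)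
    (hH : ∀ x, HasDerivAt H (h x) x)
    (hg₀ : Continuous g₀) (hg₀inf : Tendsto g₀ atTop (nhds g₀inf)) :
    Tendsto (fun k : ℕ =>
        ∫ t in (0:ℝ)..1, f t * ((1 + |uSpike k t|) * g₀ (uSpike k t)) * h (ySpike k t))
      atTop
      (nhds ((∫ t in (0:ℝ)..(1/2), f t * ((1 + |(0:ℝ)|) * g₀ 0) * h 0) +
             (∫ t in (1/2:ℝ)..1, f t * ((1 + |(0:ℝ)|) * g₀ 0) * h 1) +
             f (1 / 2) * g₀inf * (H 1 - H 0))) := by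
  have hM0 : (0:ℝ) ≤ M := le_trans (abs_nonneg _) (hhbd 0)
  set C₁ : ℝ := ∫ t in (0:ℝ)..(1/2), f t * ((1 + |(0:ℝ)|) * g₀ 0) * h 0 with hC1def
  set Bt : ℝ := ∫ t in (1/2:ℝ)..1, f t * ((1 + |(0:ℝ)|) * g₀ 0) * h 1 with hBtdef
  set E : ℕ → ℝ :=
    fun k => ∫ t in (1/2:ℝ)..(1/2+1/(k:ℝ)), (f t - f (1/2)) * h ((k:ℝ)*(t-1/2)) with hEdef
  set Bk : ℕ → ℝ :=
    fun k => ∫ t in (1/2+1/(k:ℝ))..1, f t * ((1 + |(0:ℝ)|) * g₀ 0) * h 1 with hBkdef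
  set Dk : ℕ → ℝ :=
    fun k => ∫ t in (1/2:ℝ)..(1/2+1/(k:ℝ)), f t * ((1 + |(0:ℝ)|) * g₀ 0) * h 1 with hDkdef
  -- basic limits
  have t1 : Tendsto (fun k : ℕ => ((1:ℝ)+(k:ℝ))/(k:ℝ)) atTop (nhds 1) := by
    have h0 : Tendsto (fun k : ℕ => 1/(k:ℝ) + 1) atTop (nhds (0+1)) :=
      (tendsto_one_div_atTop_nhds_zero_nat).add tendsto_const_nhds
    rw [zero_add] at h0
    apply h0.congr'
    filter_upwards [eventually_ge_atTop 1] with k hk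
    have hκ : (k:ℝ) ≠ 0 := by
      have : (1:ℝ) ≤ (k:ℝ) := by exact_mod_cast hk
      linarith
    field_simp
  have tg : Tendsto (fun k : ℕ => g₀ (k:ℝ)) atTop (nhds g₀inf) :=
    hg₀inf.comp tendsto_natCast_atTop_atTop
  -- the rescaled error term tends to 0
  have tE : Tendsto (fun k : ℕ => (k:ℝ) * E k) atTop (nhds 0) := by
    rw [Metric.tendsto_atTop]
    intro ε hε
    have hM1 : (0:ℝ) < M + 1 := by linarith
    set ε' : ℝ := ε / (2*(M+1)) with hε'def
    have hε' : 0 < ε' := by positivity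
    have hc : ContinuousWithinAt f (Set.Icc 0 1) (1/2) := hf (1/2) (by norm_num)
    obtain ⟨δ, hδ, hδ'⟩ := Metric.continuousWithinAt_iff.mp hc ε' hε'
    obtain ⟨N, hN⟩ := exists_nat_gt (max 2 (1/δ))
    refine ⟨N, fun k hk => ?_⟩
    have hκN : (N:ℝ) ≤ (k:ℝ) := by exact_mod_cast hk
    have hκ2 : (2:ℝ) < (k:ℝ) := lt_of_le_of_lt (le_max_left _ _) (lt_of_lt_of_le hN hκN)
    have hκ0 : (0:ℝ) < (k:ℝ) := by linarith
    have h1δ : 1/δ < (k:ℝ) := lt_of_le_of_lt (le_max_right _ _) (lt_of_lt_of_le hN hκN)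
    have hinv : 1/(k:ℝ) < δ := by
      rw [div_lt_iff₀ hκ0]
      have := (div_lt_iff₀ hδ).mp h1δ
      linarith
    have hinv2 : 1/(k:ℝ) ≤ 1/2 := by
      rw [div_le_div_iff₀ hκ0 (by norm_num)]; linarith
    have hb1 : (1/2:ℝ) + 1/(k:ℝ) ≤ 1 := by linarith
    have hbpos : (1/2:ℝ) ≤ 1/2 + 1/(k:ℝ) := by
      have : (0:ℝ) < 1/(k:ℝ) := by positivity
      linarith
    have hEb : ‖E k‖ ≤ (ε' * M) * |(1/2 + 1/(k:ℝ)) - 1/2| := by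
      apply intervalIntegral.norm_integral_le_of_norm_le_const
      intro t ht
      rw [Set.uIoc_of_le hbpos] at ht
      have htIcc : t ∈ Set.Icc (0:ℝ) 1 := ⟨by linarith [ht.1], le_trans ht.2 hb1⟩
      have hdist : dist t (1/2) < δ := by
        rw [Real.dist_eq, abs_of_nonneg (by linarith [ht.1] : (0:ℝ) ≤ t - 1/2)]
        linarith [ht.2]
      have hfb : |f t - f (1/2)| ≤ ε' := by
        have := hδ' htIcc hdist
        rw [Real.dist_eq] at this
        exact le_of_lt this
      calc ‖(f t - f (1/2)) * h ((k:ℝ)*(t-1/2))‖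
          = |f t - f (1/2)| * |h ((k:ℝ)*(t-1/2))| := by rw [Real.norm_eq_abs, abs_mul]
        _ ≤ ε' * M := mul_le_mul hfb (hhbd _) (abs_nonneg _) hε'.le
    have habs : |(1/2 + 1/(k:ℝ)) - 1/2| = 1/(k:ℝ) := by
      rw [add_sub_cancel_left, abs_of_pos (by positivity)]
    rw [Real.dist_eq, sub_zero, abs_mul, abs_of_pos hκ0]
    rw [habs] at hEb
    have hkE : (k:ℝ) * |E k| ≤ ε' * M := by
      have := mul_le_mul_of_nonneg_left hEb hκ0.le
      rw [Real.norm_eq_abs] at this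
      calc (k:ℝ) * |E k| ≤ (k:ℝ) * (ε' * M * (1/(k:ℝ))) := this
        _ = ε' * M * ((k:ℝ) * (1/(k:ℝ))) := by ring
        _ = ε' * M := by rw [mul_one_div_cancel (ne_of_gt hκ0), mul_one]
    have : ε' * M < ε := by
      rw [hε'def, div_mul_eq_mul_div, div_lt_iff₀ (by linarith : (0:ℝ) < 2*(M+1))]
      nlinarith
    linarith
  -- the boundary correction tends to 0
  obtain ⟨Kf, hKf⟩ := IsCompact.exists_bound_of_continuousOn isCompact_Icc hf
  have hKf0 : 0 ≤ Kf := le_trans (norm_nonneg (f 0)) (hKf 0 ⟨le_rfl, by norm_num⟩)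
  set c₀ : ℝ := (1 + |(0:ℝ)|) * g₀ 0 with hc₀def
  have tD : Tendsto Dk atTop (nhds 0) := by
    apply squeeze_zero_norm'
      (a := fun k : ℕ => (Kf * (|c₀| * M)) * (1/(k:ℝ)))
    · filter_upwards [eventually_ge_atTop 2] with k hk
      have hκ2 : (2:ℝ) ≤ (k:ℝ) := by exact_mod_cast hk
      have hκ0 : (0:ℝ) < (k:ℝ) := by linarith
      have hinv2 : 1/(k:ℝ) ≤ 1/2 := by
        rw [div_le_div_iff₀ hκ0 (by norm_num)]; linarith
      have hb1 : (1/2:ℝ) + 1/(k:ℝ) ≤ 1 := by linarith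
      have hbpos : (1/2:ℝ) ≤ 1/2 + 1/(k:ℝ) := by
        have : (0:ℝ) < 1/(k:ℝ) := by positivity
        linarith
      have hbd : ‖Dk k‖ ≤ (Kf * (|c₀| * M)) * |(1/2 + 1/(k:ℝ)) - 1/2| := by
        apply intervalIntegral.norm_integral_le_of_norm_le_const
        intro t ht
        rw [Set.uIoc_of_le hbpos] at ht
        have htIcc : t ∈ Set.Icc (0:ℝ) 1 := ⟨by linarith [ht.1], le_trans ht.2 hb1⟩
        calc ‖f t * c₀ * h 1‖ = ‖f t‖ * (|c₀| * |h 1|) := by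
              rw [Real.norm_eq_abs, abs_mul, abs_mul, Real.norm_eq_abs, mul_assoc]
          _ ≤ Kf * (|c₀| * M) := by
              apply mul_le_mul (hKf t htIcc) _ (by positivity) hKf0
              exact mul_le_mul_of_nonneg_left (hhbd 1) (abs_nonneg _)
      have habs : |(1/2 + 1/(k:ℝ)) - 1/2| = 1/(k:ℝ) := by
        rw [add_sub_cancel_left, abs_of_pos (by positivity)]
      rw [habs] at hbd
      exact hbd
    · have h0 : Tendsto (fun k : ℕ => (Kf * (|c₀| * M)) * (1/(k:ℝ))) atTop
          (nhds ((Kf * (|c₀| * M)) * 0)) :=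
        tendsto_const_nhds.mul tendsto_one_div_atTop_nhds_zero_nat
      simpa using h0
  have tBk : Tendsto Bk atTop (nhds Bt) := by
    have hev : ∀ᶠ k : ℕ in atTop, Bk k = Bt - Dk k := by
      filter_upwards [eventually_ge_atTop 2] with k hk
      have hκ2 : (2:ℝ) ≤ (k:ℝ) := by exact_mod_cast hk
      have hκ0 : (0:ℝ) < (k:ℝ) := by linarith
      have hinv2 : 1/(k:ℝ) ≤ 1/2 := by
        rw [div_le_div_iff₀ hκ0 (by norm_num)]; linarith
      have hb1 : (1/2:ℝ) + 1/(k:ℝ) ≤ 1 := by linarith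
      have hbpos : (1/2:ℝ) ≤ 1/2 + 1/(k:ℝ) := by
        have : (0:ℝ) < 1/(k:ℝ) := by positivity
        linarith
      have i1 : IntervalIntegrable (fun t => f t * ((1 + |(0:ℝ)|) * g₀ 0) * h 1)
          volume (1/2) (1/2 + 1/(k:ℝ)) := by
        apply ContinuousOn.intervalIntegrable
        rw [Set.uIcc_of_le hbpos]
        exact ((hf.mono (Set.Icc_subset_Icc (by norm_num) hb1)).mul
          continuousOn_const).mul continuousOn_const
      have i2 : IntervalIntegrable (fun t => f t * ((1 + |(0:ℝ)|) * g₀ 0) * h 1)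
          volume (1/2 + 1/(k:ℝ)) 1 := by
        apply ContinuousOn.intervalIntegrable
        rw [Set.uIcc_of_le hb1]
        exact ((hf.mono (Set.Icc_subset_Icc (by linarith) le_rfl)).mul
          continuousOn_const).mul continuousOn_const
      have := intervalIntegral.integral_add_adjacent_intervals i1 i2
      simp only [hBkdef, hBtdef, hDkdef]
      rw [← hc₀def] at this
      linarith [this]
    have h0 : Tendsto (fun k : ℕ => Bt - Dk k) atTop (nhds (Bt - 0)) :=
      tendsto_const_nhds.sub tD
    rw [sub_zero] at h0
    exact h0.congr' (hev.mono fun _ e => e.symm)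
  -- eventual identification with the split form
  have hev : ∀ᶠ k : ℕ in atTop,
      (∫ t in (0:ℝ)..1, f t * ((1 + |uSpike k t|) * g₀ (uSpike k t)) * h (ySpike k t))
      = C₁ + ((((1:ℝ)+(k:ℝ))/(k:ℝ)) * g₀ (k:ℝ) * (f (1/2) * (H 1 - H 0))
            + (((1:ℝ)+(k:ℝ))/(k:ℝ)) * g₀ (k:ℝ) * ((k:ℝ) * E k)) + Bk k := by
    filter_upwards [eventually_ge_atTop 2] with k hk
    have hκ0 : ((k:ℝ)) ≠ 0 := by
      have : (2:ℝ) ≤ (k:ℝ) := by exact_mod_cast hk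
      linarith
    rw [split_eq f h H g₀ hf hh hH hg₀ k hk]
    have : ((1:ℝ)+(k:ℝ)) * g₀ (k:ℝ) * E k
        = (((1:ℝ)+(k:ℝ))/(k:ℝ)) * g₀ (k:ℝ) * ((k:ℝ) * E k) := by
      field_simp
    rw [this]
  have total : Tendsto (fun k : ℕ =>
      C₁ + ((((1:ℝ)+(k:ℝ))/(k:ℝ)) * g₀ (k:ℝ) * (f (1/2) * (H 1 - H 0))
            + (((1:ℝ)+(k:ℝ))/(k:ℝ)) * g₀ (k:ℝ) * ((k:ℝ) * E k)) + Bk k) atTop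
      (nhds (C₁ + ((1:ℝ) * g₀inf * (f (1/2) * (H 1 - H 0)) + (1:ℝ) * g₀inf * 0) + Bt)) :=
    (tendsto_const_nhds.add ((((t1.mul tg).mul tendsto_const_nhds)).add
      ((t1.mul tg).mul tE))).add tBk
  have hval : C₁ + ((1:ℝ) * g₀inf * (f (1/2) * (H 1 - H 0)) + (1:ℝ) * g₀inf * 0) + Bt
      = C₁ + Bt + f (1/2) * g₀inf * (H 1 - H 0) := by ring
  rw [hval] at total
  exact total.congr' (hev.mono fun _ e => e.symm)
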